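/- Duhamel's formula: let H(s) be a smooth (e.g. affine, H(s) = H₀ + sV) family of matrices and β ∈ ℝ. Then (d/ds) e^{−βH(s)} = −β ∫₀¹ (e^{−βH(s)})^τ (dH/ds) (e^{−βH(s)})^{1−τ} dτ, where for the affine family dH/ds = V and (e^{−βH(s)})^τ = e^{−τβH(s)}. -/

import Mathlib

open Matrix intervalIntegral Filter NormedSpace

namespace DuhamelAux

section linfty
attribute [local instance] Matrix.linftyOpNormedRing Matrix.linftyOpNormedAlgebra

variable {n : Type*} [Fintype n] [DecidableEq n]

lemma compOfReal {E : Type*} [NormedAddCommGroup E] [NormedSpace ℂ E] {e : ℂ → E} {e' : E}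
    {z : ℝ} (hf : HasDerivAt e e' (z : ℂ)) : HasDerivAt (fun y : ℝ => e (y : ℂ)) e' z := by
  simpa [Function.comp_def] using HasDerivAt.scomp (𝕜 := ℝ) z hf Complex.ofRealCLM.hasDerivAt

lemma aux_prod_slope (X Y : Matrix n n ℂ) (t : ℝ) :
    Tendsto (slope (fun τ : ℝ =>
        NormedSpace.exp (((τ : ℝ) : ℂ) • X) * NormedSpace.exp (((1 - τ : ℝ) : ℂ) • Y)) t)
      (nhdsWithin t {t}ᶜ)
      (nhds (NormedSpace.exp (((t : ℝ) : ℂ) • X) * (X - Y) *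
        NormedSpace.exp (((1 - t : ℝ) : ℂ) • Y))) := by
  refine hasDerivAt_iff_tendsto_slope.1 ?_
  have h1 : HasDerivAt (fun τ : ℝ => NormedSpace.exp (((τ : ℝ) : ℂ) • X))
      (NormedSpace.exp (((t : ℝ) : ℂ) • X) * X) t :=
    compOfReal (hasDerivAt_exp_smul_const X ((t : ℝ) : ℂ))
  have h2r : HasDerivAt (fun τ : ℝ => NormedSpace.exp (((τ : ℝ) : ℂ) • Y))
      (Y * NormedSpace.exp (((1 - t : ℝ) : ℂ) • Y)) (1 - t) :=
    compOfReal (hasDerivAt_exp_smul_const' Y (((1 - t : ℝ)) : ℂ))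
  have hin : HasDerivAt (fun τ : ℝ => (1 : ℝ) - τ) (-1) t := (hasDerivAt_id t).const_sub 1
  have h2 : HasDerivAt (fun τ : ℝ => NormedSpace.exp (((1 - τ : ℝ) : ℂ) • Y))
      ((-1 : ℝ) • (Y * NormedSpace.exp (((1 - t : ℝ) : ℂ) • Y))) t := h2r.scomp t hin
  have := h1.mul h2
  refine this.congr_deriv ?_
  simp only [neg_one_smul, mul_neg]
  noncomm_ring

lemma aux_exp_continuous :
    Continuous (NormedSpace.exp : Matrix n n ℂ → Matrix n n ℂ) :=
  NormedSpace.exp_continuous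

lemma aux_mul_continuous :
    Continuous (fun p : Matrix n n ℂ × Matrix n n ℂ => p.1 * p.2) :=
  continuous_mul

end linfty

end DuhamelAux

attribute [local instance] Matrix.normedAddCommGroup Matrix.normedSpace

variable {n : Type*} [Fintype n] [DecidableEq n]

lemma prod_hasDerivAt (X Y : Matrix n n ℂ) (t : ℝ) :
    HasDerivAt (fun τ : ℝ =>
        NormedSpace.exp (((τ : ℝ) : ℂ) • X) * NormedSpace.exp (((1 - τ : ℝ) : ℂ) • Y))
      (NormedSpace.exp (((t : ℝ) : ℂ) • X) * (X - Y) *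
        NormedSpace.exp (((1 - t : ℝ) : ℂ) • Y)) t := by
  refine hasDerivAt_iff_tendsto_slope.2 ?_
  exact DuhamelAux.aux_prod_slope X Y t

lemma exp_cont : Continuous (NormedSpace.exp : Matrix n n ℂ → Matrix n n ℂ) :=
  DuhamelAux.aux_exp_continuous

lemma mul_cont : Continuous (fun p : Matrix n n ℂ × Matrix n n ℂ => p.1 * p.2) :=
  DuhamelAux.aux_mul_continuous

lemma sandwich_cont {α : Type*} [TopologicalSpace α] (B : Matrix n n ℂ)
    {f g : α → Matrix n n ℂ} (hf : Continuous f) (hg : Continuous g) :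
    Continuous fun x => NormedSpace.exp (f x) * B * NormedSpace.exp (g x) := by
  have h1 : Continuous fun x => NormedSpace.exp (f x) := exp_cont.comp hf
  have h2 : Continuous fun x => NormedSpace.exp (g x) := exp_cont.comp hg
  exact mul_cont.comp ((mul_cont.comp (h1.prodMk continuous_const)).prodMk h2)

/-- `e^X - e^Y = ∫₀¹ e^{τX} (X - Y) e^{(1-τ)Y} dτ`. -/
lemma exp_sub_exp (X Y : Matrix n n ℂ) :
    NormedSpace.exp X - NormedSpace.exp Y = ∫ τ in (0:ℝ)..1,
      NormedSpace.exp (((τ : ℝ) : ℂ) • X) * (X - Y) *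
        NormedSpace.exp (((1 - τ : ℝ) : ℂ) • Y) := by
  have hc : Continuous fun τ : ℝ =>
      NormedSpace.exp (((τ : ℝ) : ℂ) • X) * (X - Y) *
        NormedSpace.exp (((1 - τ : ℝ) : ℂ) • Y) := by
    refine sandwich_cont _ ?_ ?_
    · exact (Complex.continuous_ofReal).smul continuous_const
    · exact (Complex.continuous_ofReal.comp (continuous_const.sub continuous_id)).smul
        continuous_const
  have := intervalIntegral.integral_eq_sub_of_hasDerivAt
    (f := fun τ : ℝ =>
      NormedSpace.exp (((τ : ℝ) : ℂ) • X) * NormedSpace.exp (((1 - τ : ℝ) : ℂ) • Y))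
    (fun t _ => prod_hasDerivAt X Y t) (hc.intervalIntegrable 0 1)
  rw [this]
  norm_num [NormedSpace.exp_zero]


/-- Duhamel's formula for the affine family `H(s) = H₀ + s V`:
`(d/ds) e^{−βH(s)} = −β ∫₀¹ e^{−τβH(s)} V e^{−(1−τ)βH(s)} dτ`. -/
theorem stmt10 (H₀ V : Matrix n n ℂ) (hH₀ : H₀.IsHermitian) (hV : V.IsHermitian)
    (β : ℝ) (s : ℝ) :
    HasDerivAt (fun s : ℝ => NormedSpace.exp ((-(β : ℂ)) • (H₀ + (s : ℂ) • V)))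
      ((-(β : ℂ)) • ∫ τ in (0:ℝ)..1,
        NormedSpace.exp ((-(τ * β) : ℂ) • (H₀ + (s : ℂ) • V)) * V *
          NormedSpace.exp ((-((1 - τ) * β) : ℂ) • (H₀ + (s : ℂ) • V))) s := by
  set A : ℝ → Matrix n n ℂ := fun u => (-(β : ℂ)) • (H₀ + (u : ℂ) • V) with hA
  set B : Matrix n n ℂ := (-(β : ℂ)) • V with hB
  have hAcont : Continuous A := by
    refine (continuous_const : Continuous fun _ : ℝ => (-(β : ℂ))).smul
      ((continuous_const : Continuous fun _ : ℝ => H₀).add ?_)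
    exact Complex.continuous_ofReal.smul continuous_const
  have hdiff : ∀ u : ℝ, A u - A s = ((u - s : ℝ) : ℂ) • B := by
    intro u
    simp only [hA, hB]
    push_cast
    module
  -- the parametric integral
  set g : ℝ → Matrix n n ℂ := fun u => ∫ τ in (0:ℝ)..1,
      NormedSpace.exp (((τ : ℝ) : ℂ) • A u) * B *
        NormedSpace.exp (((1 - τ : ℝ) : ℂ) • A s) with hg
  have hgcont : Continuous g := by
    apply intervalIntegral.continuous_parametric_intervalIntegral_of_continuous'
    refine sandwich_cont _ ?_ ?_
    · exact (Complex.continuous_ofReal.comp continuous_snd).smul (hAcont.comp continuous_fst)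
    · exact (Complex.continuous_ofReal.comp
        (continuous_const.sub continuous_snd)).smul continuous_const
  have key : ∀ u : ℝ, NormedSpace.exp (A u) - NormedSpace.exp (A s)
      = ((u - s : ℝ) : ℂ) • g u := by
    intro u
    rw [exp_sub_exp (A u) (A s), hg]
    rw [← intervalIntegral.integral_smul]
    apply intervalIntegral.integral_congr
    intro τ _
    simp only [hdiff u, mul_smul_comm, smul_mul_assoc]
  have hgs : g s = (-(β : ℂ)) • ∫ τ in (0:ℝ)..1,
      NormedSpace.exp ((-(τ * β) : ℂ) • (H₀ + (s : ℂ) • V)) * V *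
        NormedSpace.exp ((-((1 - τ) * β) : ℂ) • (H₀ + (s : ℂ) • V)) := by
    rw [hg, ← intervalIntegral.integral_smul]
    apply intervalIntegral.integral_congr
    intro τ _
    have e1 : ((τ : ℝ) : ℂ) • A s = (-(τ * β) : ℂ) • (H₀ + (s : ℂ) • V) := by
      rw [hA]
      simp only [smul_smul]
      congr 1
      push_cast
      ring
    have e2 : ((1 - τ : ℝ) : ℂ) • A s = (-((1 - τ) * β) : ℂ) • (H₀ + (s : ℂ) • V) := by
      rw [hA]
      simp only [smul_smul]
      congr 1
      push_cast
      ring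
    simp only [e1, e2, hB, mul_smul_comm, smul_mul_assoc]
  refine hasDerivAt_iff_tendsto_slope.2 ?_
  rw [← hgs]
  have heq : ∀ u ∈ ({s}ᶜ : Set ℝ),
      slope (fun u : ℝ => NormedSpace.exp (A u)) s u = g u := by
    intro u hu
    have hu' : u - s ≠ 0 := sub_ne_zero.2 hu
    rw [slope_def_module, key u, Complex.coe_smul, smul_smul,
      inv_mul_cancel₀ hu', one_smul]
  refine Tendsto.congr' ?_ ((hgcont.continuousAt.tendsto).mono_left nhdsWithin_le_nhds)
  filter_upwards [self_mem_nhdsWithin] with u hu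
  exact (heq u hu).symm
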